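/- Let x_1, …, x_{2m} be i.i.d. Gaussian random vectors N(μ, I_d) in ℝ^d, split into two halves, and define the within-class estimator T = (1/m²)·Σ_{k=1}^{m} Σ_{l=m+1}^{2m} ⟨x_k, x_l⟩. Then T is an unbiased estimator of the squared mean norm, E[T] = ‖μ‖², and its variance equals Var(T) = 2‖μ‖²/m + d/m². -/

import Mathlib

open MeasureTheory ProbabilityTheory
open Real
open scoped ENNReal NNReal


lemma my_odd_int (b : ℝ) : ∫ x : ℝ, x * rexp (-b * x^2) = 0 := by
  have h := (Measure.measurePreserving_neg (volume : Measure ℝ)).integral_comp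
    (Homeomorph.neg ℝ).measurableEmbedding (fun x : ℝ => x * rexp (-b * x^2))
  simp only [neg_sq, neg_mul] at h ⊢
  rw [integral_neg] at h
  linarith

lemma my_sq_int : ∫ x : ℝ, x^2 * rexp (-(2⁻¹:ℝ) * x^2) = Real.sqrt (2*π) := by
  have h1 : ∫ x : ℝ, x^2 * rexp (-(2⁻¹:ℝ) * x^2)
      = 2 * ∫ x in Set.Ioi (0:ℝ), x^2 * rexp (-(2⁻¹:ℝ) * x^2) := by
    rw [← integral_comp_abs (f := fun x : ℝ => x^2 * rexp (-(2⁻¹:ℝ) * x^2))]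
    congr 1 with x
    rw [sq_abs]
  have h0 := integral_rpow_mul_exp_neg_mul_rpow (p := 2) (q := 2) (b := 2⁻¹)
    (by norm_num) (by norm_num) (by norm_num)
  have h2 : ∫ x in Set.Ioi (0:ℝ), x^2 * rexp (-(2⁻¹:ℝ) * x^2)
      = (2⁻¹:ℝ) ^ (-((2:ℝ)+1)/2) * (1/2) * Real.Gamma (((2:ℝ)+1)/2) := by
    rw [← h0]
    refine setIntegral_congr_fun measurableSet_Ioi (fun x hx => ?_)
    rw [← Real.rpow_natCast x 2]
    norm_num
  have hg : Real.Gamma (((2:ℝ)+1)/2) = Real.sqrt π / 2 := by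
    rw [show ((2:ℝ)+1)/2 = 1/2 + 1 by norm_num, Real.Gamma_add_one (by norm_num),
      Real.Gamma_one_half_eq]
    ring
  rw [h1, h2, hg]
  rw [show ((2:ℝ)⁻¹) ^ (-((2:ℝ)+1)/2) = (2:ℝ) ^ ((3:ℝ)/2) by
    rw [← Real.rpow_neg_one, ← Real.rpow_mul (by norm_num)]
    norm_num]
  rw [show ((3:ℝ)/2) = 1 + 1/2 by norm_num, Real.rpow_add (by norm_num), Real.rpow_one,
    ← Real.sqrt_eq_rpow, Real.sqrt_mul (by norm_num)]
  ring



lemma gauss0_pdf_eq (x : ℝ) :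
    gaussianPDFReal 0 1 x = (Real.sqrt (2*π))⁻¹ * rexp (-(2⁻¹:ℝ) * x^2) := by
  simp only [gaussianPDFReal, NNReal.coe_one, mul_one, sub_zero]
  congr 1
  ring

lemma gauss0_integral_eq (g : ℝ → ℝ) :
    ∫ x, g x ∂(gaussianReal 0 1) = ∫ x : ℝ, gaussianPDFReal 0 1 x * g x := by
  rw [gaussianReal_of_var_ne_zero 0 one_ne_zero, gaussianPDF_def]
  have : (fun x => ENNReal.ofReal (gaussianPDFReal 0 1 x))
      = (fun x => ((gaussianPDFReal 0 1 x).toNNReal : ℝ≥0∞)) := rfl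
  rw [this, integral_withDensity_eq_integral_smul
    ((measurable_gaussianPDFReal 0 1).real_toNNReal) g]
  congr 1 with x
  simp [NNReal.smul_def, Real.coe_toNNReal _ (gaussianPDFReal_nonneg 0 1 x)]

lemma gauss0_integrable_iff (g : ℝ → ℝ) :
    Integrable g (gaussianReal 0 1) ↔
      Integrable (fun x : ℝ => gaussianPDFReal 0 1 x * g x) volume := by
  rw [gaussianReal_of_var_ne_zero 0 one_ne_zero, gaussianPDF_def]
  have : (fun x => ENNReal.ofReal (gaussianPDFReal 0 1 x))
      = (fun x => ((gaussianPDFReal 0 1 x).toNNReal : ℝ≥0∞)) := rfl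
  rw [this, integrable_withDensity_iff_integrable_smul
    ((measurable_gaussianPDFReal 0 1).real_toNNReal)]
  constructor <;> intro h <;> refine h.congr (ae_of_all _ fun x => ?_) <;>
    simp [NNReal.smul_def, Real.coe_toNNReal _ (gaussianPDFReal_nonneg 0 1 x)]

lemma gauss0_int1 : Integrable (fun x : ℝ => x) (gaussianReal 0 1) := by
  rw [gauss0_integrable_iff]
  have : (fun x : ℝ => gaussianPDFReal 0 1 x * x)
      = fun x : ℝ => (Real.sqrt (2*π))⁻¹ * (x * rexp (-(2⁻¹:ℝ) * x^2)) := by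
    funext x; rw [gauss0_pdf_eq]; ring
  rw [this]
  exact (integrable_mul_exp_neg_mul_sq (by norm_num : (0:ℝ) < 2⁻¹)).const_mul _

lemma gauss0_int2 : Integrable (fun x : ℝ => x^2) (gaussianReal 0 1) := by
  rw [gauss0_integrable_iff]
  have : (fun x : ℝ => gaussianPDFReal 0 1 x * x^2)
      = fun x : ℝ => (Real.sqrt (2*π))⁻¹ * (x^2 * rexp (-(2⁻¹:ℝ) * x^2)) := by
    funext x; rw [gauss0_pdf_eq]; ring
  rw [this]
  refine Integrable.const_mul ?_ _
  have h := integrable_rpow_mul_exp_neg_mul_sq (by norm_num : (0:ℝ) < 2⁻¹)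
    (by norm_num : (-1:ℝ) < 2)
  have h2 : (fun x : ℝ => x ^ (2:ℝ) * rexp (-2⁻¹ * x ^ 2))
      = fun x : ℝ => x ^ 2 * rexp (-2⁻¹ * x ^ 2) := by
    funext x
    rw [show (2:ℝ) = ((2:ℕ):ℝ) by norm_num, Real.rpow_natCast x 2]
  exact h2 ▸ h

lemma gauss0_m1 : ∫ x, x ∂(gaussianReal 0 1) = 0 := by
  rw [gauss0_integral_eq]
  have : (fun x : ℝ => gaussianPDFReal 0 1 x * x)
      = fun x : ℝ => (Real.sqrt (2*π))⁻¹ * (x * rexp (-(2⁻¹:ℝ) * x^2)) := by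
    funext x; rw [gauss0_pdf_eq]; ring
  rw [this, integral_const_mul, my_odd_int]
  simp

lemma gauss0_m2 : ∫ x, x^2 ∂(gaussianReal 0 1) = 1 := by
  rw [gauss0_integral_eq]
  have : (fun x : ℝ => gaussianPDFReal 0 1 x * x^2)
      = fun x : ℝ => (Real.sqrt (2*π))⁻¹ * (x^2 * rexp (-(2⁻¹:ℝ) * x^2)) := by
    funext x; rw [gauss0_pdf_eq]; ring
  rw [this, integral_const_mul, my_sq_int]
  rw [inv_mul_cancel₀]
  positivity



lemma gauss_map_eq (c : ℝ) :
    gaussianReal c 1 = (gaussianReal 0 1).map (fun x => x + c) := by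
  rw [show (fun x : ℝ => x + c) = (· + c) from rfl, gaussianReal_map_add_const, zero_add]

lemma gauss_int1 (c : ℝ) : Integrable (fun x : ℝ => x) (gaussianReal c 1) := by
  rw [gauss_map_eq]
  rw [integrable_map_measure (g := fun x : ℝ => x) measurable_id'.aestronglyMeasurable (measurable_add_const c).aemeasurable]
  exact gauss0_int1.add (integrable_const c)

lemma gauss_int2 (c : ℝ) : Integrable (fun x : ℝ => x^2) (gaussianReal c 1) := by
  rw [gauss_map_eq]
  rw [integrable_map_measure (g := fun x : ℝ => x^2) (measurable_id'.pow_const 2).aestronglyMeasurable (measurable_add_const c).aemeasurable]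
  have : ((fun x : ℝ => x^2) ∘ (fun x : ℝ => x + c))
      = fun x : ℝ => x^2 + (2*c) * x + c^2 := by funext x; simp [Function.comp]; ring
  rw [this]
  exact (gauss0_int2.add (gauss0_int1.const_mul _)).add (integrable_const _)

lemma gauss_m1 (c : ℝ) : ∫ x, x ∂(gaussianReal c 1) = c := by
  rw [gauss_map_eq, integral_map (f := fun x : ℝ => x) (measurable_add_const c).aemeasurable measurable_id'.aestronglyMeasurable]
  rw [integral_add gauss0_int1 (integrable_const c), gauss0_m1, integral_const]
  simp

lemma gauss_m2 (c : ℝ) : ∫ x, x^2 ∂(gaussianReal c 1) = c^2 + 1 := by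
  rw [gauss_map_eq, integral_map (f := fun x : ℝ => x^2) (measurable_add_const c).aemeasurable (measurable_id'.pow_const 2).aestronglyMeasurable]
  have : (fun x : ℝ => (x + c)^2) = fun x : ℝ => x^2 + (2*c) * x + c^2 := by
    funext x; ring
  rw [show (fun x : ℝ => (x + c)^2) = fun x : ℝ => x^2 + (2*c) * x + c^2 from this]
  rw [integral_add (by exact (gauss0_int2.add (gauss0_int1.const_mul _))) (integrable_const _),
    integral_add (by exact gauss0_int2) (by exact gauss0_int1.const_mul _), gauss0_m2,
    integral_const_mul, gauss0_m1, integral_const]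
  simp; ring


lemma big_sum_eval (m d : ℕ) (μv : Fin d → ℝ) :
    ∑ k : Fin m, ∑ l : Fin m, ∑ j : Fin d, ∑ k' : Fin m, ∑ l' : Fin m, ∑ j' : Fin d,
      (μv j * μv j' + (if k = k' ∧ j = j' then (1:ℝ) else 0)) *
      (μv j * μv j' + (if l = l' ∧ j = j' then (1:ℝ) else 0))
    = (m:ℝ)^4 * (∑ j, μv j^2)^2 + 2*(m:ℝ)^3 * (∑ j, μv j^2) + (m:ℝ)^2 * d := by
  have hpt : ∀ (k k' l l' : Fin m) (j j' : Fin d),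
      (μv j * μv j' + (if k = k' ∧ j = j' then (1:ℝ) else 0)) *
      (μv j * μv j' + (if l = l' ∧ j = j' then (1:ℝ) else 0))
      = μv j * μv j' * (μv j * μv j')
        + (if j = j' then (if l = l' then μv j * μv j' else 0) else 0)
        + (if j = j' then (if k = k' then μv j * μv j' else 0) else 0)
        + (if j = j' then (if l = l' then (if k = k' then (1:ℝ) else 0) else 0) else 0) := by
    intro k k' l l' j j'
    by_cases h1 : k = k' <;> by_cases h2 : j = j' <;> by_cases h3 : l = l' <;>
      simp [h1, h2, h3] <;> ring
  simp only [hpt, Finset.sum_add_distrib, Fintype.sum_ite_eq]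
  simp only [Finset.sum_const, Finset.card_univ, Fintype.card_fin, nsmul_eq_mul,
    Finset.mul_sum, Finset.sum_ite_eq, Finset.mem_univ, if_true]
  simp only [← Finset.mul_sum, Fintype.sum_ite_eq, Finset.sum_const, Finset.card_univ,
    Fintype.card_fin, nsmul_eq_mul]
  have h1 : ∑ i : Fin d, ∑ i1 : Fin d, μv i * μv i1 * (μv i * μv i1)
      = (∑ j : Fin d, μv j^2)^2 := by
    rw [sq, Finset.sum_mul_sum]
    exact Finset.sum_congr rfl fun _ _ => Finset.sum_congr rfl fun _ _ => by ring
  have h2 : ∑ i : Fin d, μv i * μv i = ∑ j : Fin d, μv j ^ 2 := by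
    exact Finset.sum_congr rfl fun _ _ => (sq _).symm
  rw [h1, h2]
  ring


/-- Within-class estimator. Let `x_1,…,x_{2m}` be i.i.d. `N(μ, I_d)` split into
two halves (modeled here with index type `Fin m ⊕ Fin m` and all coordinates of all vectors
independent with the Gaussian coordinate distributions). Then
`T = (1/m²)·Σ_{k=1}^m Σ_{l=m+1}^{2m} ⟨x_k, x_l⟩` satisfies `E[T] = ‖μ‖²` and
`Var(T) = 2‖μ‖²/m + d/m²`. -/


theorem within_class_estimator_mean_variance
    (d m : ℕ) (hd : 1 ≤ d) (hm : 1 ≤ m)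
    (μv : Fin d → ℝ)
    (Ω : Type*) [MeasurableSpace Ω] (μ : Measure Ω) [IsProbabilityMeasure μ]
    (Z : (Fin m ⊕ Fin m) × Fin d → Ω → ℝ)
    (hmeas : ∀ s, Measurable (Z s))
    (hindep : iIndepFun Z μ)
    (hlaw : ∀ (s : Fin m ⊕ Fin m) (j : Fin d),
      μ.map (Z (s, j)) = gaussianReal (μv j) 1)
    (T : Ω → ℝ)
    (hT : T = fun ω => (1 / (m : ℝ) ^ 2) *
      ∑ k : Fin m, ∑ l : Fin m, ∑ j : Fin d,
        Z (Sum.inl k, j) ω * Z (Sum.inr l, j) ω) :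
    (∫ ω, T ω ∂μ) = ∑ j : Fin d, μv j ^ 2 ∧
    variance T μ
      = 2 * (∑ j : Fin d, μv j ^ 2) / m + (d : ℝ) / (m : ℝ) ^ 2 := by
  set S : ℝ := ∑ j : Fin d, μv j ^ 2 with hS
  have hmne : (m : ℝ) ≠ 0 := Nat.cast_ne_zero.mpr (by omega)
  have hlaw' : ∀ s : (Fin m ⊕ Fin m) × Fin d, μ.map (Z s) = gaussianReal (μv s.2) 1 :=
    fun s => by rw [← Prod.mk.eta (p := s)]; exact hlaw s.1 s.2
  -- first and second moments, integrability
  have hint1 : ∀ s, Integrable (Z s) μ := by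
    intro s
    have h := gauss_int1 (μv s.2)
    rw [← hlaw' s] at h
    exact (integrable_map_measure measurable_id'.aestronglyMeasurable
      (hmeas s).aemeasurable).mp h
  have hint2 : ∀ s, Integrable (fun ω => Z s ω ^ 2) μ := by
    intro s
    have h := gauss_int2 (μv s.2)
    rw [← hlaw' s] at h
    exact (integrable_map_measure (measurable_id'.pow_const 2).aestronglyMeasurable
      (hmeas s).aemeasurable).mp h
  have hm1 : ∀ s, ∫ ω, Z s ω ∂μ = μv s.2 := by
    intro s
    have h := gauss_m1 (μv s.2)
    rw [← hlaw' s, integral_map (hmeas s).aemeasurable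
      measurable_id'.aestronglyMeasurable] at h
    exact h
  have hm2 : ∀ s, ∫ ω, Z s ω ^ 2 ∂μ = μv s.2 ^ 2 + 1 := by
    intro s
    have h := gauss_m2 (μv s.2)
    rw [← hlaw' s, integral_map (hmeas s).aemeasurable
      (measurable_id'.pow_const 2).aestronglyMeasurable] at h
    exact h
  -- second-order products
  have hE2int : ∀ a b, Integrable (fun ω => Z a ω * Z b ω) μ := by
    intro a b
    by_cases hab : a = b
    · subst hab
      exact (hint2 a).congr (ae_of_all _ fun ω => sq (Z a ω))
    · exact (hindep.indepFun hab).integrable_mul (hint1 a) (hint1 b)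
  have hE2 : ∀ a b, ∫ ω, Z a ω * Z b ω ∂μ
      = μv a.2 * μv b.2 + (if a = b then (1:ℝ) else 0) := by
    intro a b
    by_cases hab : a = b
    · subst hab
      simp only [if_pos rfl]
      calc ∫ ω, Z a ω * Z a ω ∂μ = ∫ ω, Z a ω ^ 2 ∂μ := by
            congr 1; funext ω; ring
        _ = μv a.2 * μv a.2 + 1 := by rw [hm2 a]; ring
    · rw [if_neg hab, add_zero]
      have := (hindep.indepFun hab).integral_mul_eq_mul_integral (hint1 a).1 (hint1 b).1
      rw [← hm1 a, ← hm1 b]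
      exact this
  -- fourth-order products
  have hIndep4 : ∀ (k k' l l' : Fin m) (j j' : Fin d),
      IndepFun (Z (Sum.inl k, j) * Z (Sum.inl k', j'))
        (Z (Sum.inr l, j) * Z (Sum.inr l', j')) μ := by
    intro k k' l l' j j'
    exact hindep.indepFun_mul_mul hmeas _ _ _ _
      (by simp) (by simp) (by simp) (by simp)
  have hE4int : ∀ (k k' l l' : Fin m) (j j' : Fin d),
      Integrable (fun ω => (Z (Sum.inl k, j) ω * Z (Sum.inr l, j) ω) *
        (Z (Sum.inl k', j') ω * Z (Sum.inr l', j') ω)) μ := by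
    intro k k' l l' j j'
    have h := (hIndep4 k k' l l' j j').integrable_mul
      (hE2int (Sum.inl k, j) (Sum.inl k', j')) (hE2int (Sum.inr l, j) (Sum.inr l', j'))
    exact h.congr (ae_of_all _ fun ω => by simp [Pi.mul_apply]; ring)
  have hE4 : ∀ (k k' l l' : Fin m) (j j' : Fin d),
      ∫ ω, (Z (Sum.inl k, j) ω * Z (Sum.inr l, j) ω) *
        (Z (Sum.inl k', j') ω * Z (Sum.inr l', j') ω) ∂μ
      = (μv j * μv j' + (if k = k' ∧ j = j' then (1:ℝ) else 0)) *
        (μv j * μv j' + (if l = l' ∧ j = j' then (1:ℝ) else 0)) := by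
    intro k k' l l' j j'
    have h := (hIndep4 k k' l l' j j').integral_mul_eq_mul_integral
      (hE2int (Sum.inl k, j) (Sum.inl k', j')).1 (hE2int (Sum.inr l, j) (Sum.inr l', j')).1
    have hL : ∫ ω, (Z (Sum.inl k, j) ω * Z (Sum.inr l, j) ω) *
        (Z (Sum.inl k', j') ω * Z (Sum.inr l', j') ω) ∂μ
        = ∫ ω, ((Z (Sum.inl k, j) * Z (Sum.inl k', j')) *
            (Z (Sum.inr l, j) * Z (Sum.inr l', j'))) ω ∂μ := by
      congr 1; funext ω; simp only [Pi.mul_apply]; ring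
    rw [hL]
    rw [show ∫ ω, ((Z (Sum.inl k, j) * Z (Sum.inl k', j')) *
            (Z (Sum.inr l, j) * Z (Sum.inr l', j'))) ω ∂μ
        = integral μ ((Z (Sum.inl k, j) * Z (Sum.inl k', j')) *
            (Z (Sum.inr l, j) * Z (Sum.inr l', j'))) from rfl, h]
    have e1 := hE2 (Sum.inl k, j) (Sum.inl k', j')
    have e2 := hE2 (Sum.inr l, j) (Sum.inr l', j')
    simp only [Prod.mk.injEq, Sum.inl.injEq, Sum.inr.injEq] at e1 e2
    rw [show integral μ (Z (Sum.inl k, j) * Z (Sum.inl k', j'))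
        = ∫ ω, Z (Sum.inl k, j) ω * Z (Sum.inl k', j') ω ∂μ from rfl,
      show integral μ (Z (Sum.inr l, j) * Z (Sum.inr l', j'))
        = ∫ ω, Z (Sum.inr l, j) ω * Z (Sum.inr l', j') ω ∂μ from rfl, e1, e2]
  -- the mean
  have hmean : (∫ ω, T ω ∂μ) = S := by
    rw [hT]
    rw [integral_const_mul]
    rw [integral_finset_sum _ (fun k _ => integrable_finset_sum _
      (fun l _ => integrable_finset_sum _ (fun j _ => hE2int (Sum.inl k, j) (Sum.inr l, j))))]
    have : ∀ k : Fin m, ∫ ω, (∑ l : Fin m, ∑ j : Fin d,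
        Z (Sum.inl k, j) ω * Z (Sum.inr l, j) ω) ∂μ = ∑ l : Fin m, ∑ j : Fin d, μv j ^ 2 := by
      intro k
      rw [integral_finset_sum _ (fun l _ => integrable_finset_sum _
        (fun j _ => hE2int (Sum.inl k, j) (Sum.inr l, j)))]
      refine Finset.sum_congr rfl fun l _ => ?_
      rw [integral_finset_sum _ (fun j _ => hE2int (Sum.inl k, j) (Sum.inr l, j))]
      refine Finset.sum_congr rfl fun j _ => ?_
      rw [hE2]
      simp [sq]
    simp only [this, Finset.sum_const, Finset.card_univ, Fintype.card_fin, nsmul_eq_mul, hS]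
    field_simp
  refine ⟨hmean, ?_⟩
  have hTmeas : Measurable T := by
    rw [hT]
    exact (Finset.measurable_sum _ fun k _ => Finset.measurable_sum _ fun l _ =>
      Finset.measurable_sum _ fun j _ => (hmeas _).mul (hmeas _)).const_mul _
  have hT2 : (fun ω => T ω ^ 2) = fun ω => (1/(m:ℝ)^2)^2 *
      ∑ k : Fin m, ∑ l : Fin m, ∑ j : Fin d, ∑ k' : Fin m, ∑ l' : Fin m, ∑ j' : Fin d,
        (Z (Sum.inl k, j) ω * Z (Sum.inr l, j) ω) *
        (Z (Sum.inl k', j') ω * Z (Sum.inr l', j') ω) := by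
    funext ω
    rw [hT, mul_pow]
    congr 1
    rw [sq]
    simp only [Finset.sum_mul, Finset.mul_sum]
    exact Finset.sum_congr rfl fun k _ => Finset.sum_congr rfl fun l _ =>
      Finset.sum_congr rfl fun j _ => Finset.sum_congr rfl fun k' _ =>
      Finset.sum_congr rfl fun l' _ => Finset.sum_congr rfl fun j' _ => mul_comm _ _
  have hT2int : Integrable (fun ω => T ω ^ 2) μ := by
    rw [hT2]
    exact (integrable_finset_sum _ (fun k _ => integrable_finset_sum _ (fun l _ =>
      integrable_finset_sum _ (fun j _ => integrable_finset_sum _ (fun k' _ =>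
      integrable_finset_sum _ (fun l' _ => integrable_finset_sum _
      (fun j' _ => hE4int k k' l l' j j'))))))).const_mul _
  have hMem : MemLp T 2 μ := (memLp_two_iff_integrable_sq
    hTmeas.aestronglyMeasurable).mpr hT2int
  have hvar := variance_eq_sub hMem
  have hsec : ∫ ω, T ω ^ 2 ∂μ
      = (1/(m:ℝ)^2)^2 * ((m:ℝ)^4 * S^2 + 2*(m:ℝ)^3 * S + (m:ℝ)^2 * d) := by
    rw [hT2, integral_const_mul]
    rw [integral_finset_sum _ (fun k _ => integrable_finset_sum _ (fun l _ =>
      integrable_finset_sum _ (fun j _ => integrable_finset_sum _ (fun k' _ =>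
      integrable_finset_sum _ (fun l' _ => integrable_finset_sum _
      (fun j' _ => hE4int k k' l l' j j'))))))]
    rw [show (∑ k : Fin m, ∫ ω, (∑ l : Fin m, ∑ j : Fin d, ∑ k' : Fin m, ∑ l' : Fin m,
        ∑ j' : Fin d, (Z (Sum.inl k, j) ω * Z (Sum.inr l, j) ω) *
        (Z (Sum.inl k', j') ω * Z (Sum.inr l', j') ω)) ∂μ)
      = ∑ k : Fin m, ∑ l : Fin m, ∑ j : Fin d, ∑ k' : Fin m, ∑ l' : Fin m, ∑ j' : Fin d,
        (μv j * μv j' + (if k = k' ∧ j = j' then (1:ℝ) else 0)) *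
        (μv j * μv j' + (if l = l' ∧ j = j' then (1:ℝ) else 0)) from
      Finset.sum_congr rfl fun k _ => by
        rw [integral_finset_sum _ (fun l _ => integrable_finset_sum _ (fun j _ =>
          integrable_finset_sum _ (fun k' _ => integrable_finset_sum _ (fun l' _ =>
          integrable_finset_sum _ (fun j' _ => hE4int k k' l l' j j')))))]
        refine Finset.sum_congr rfl fun l _ => ?_
        rw [integral_finset_sum _ (fun j _ => integrable_finset_sum _ (fun k' _ =>
          integrable_finset_sum _ (fun l' _ => integrable_finset_sum _
          (fun j' _ => hE4int k k' l l' j j'))))]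
        refine Finset.sum_congr rfl fun j _ => ?_
        rw [integral_finset_sum _ (fun k' _ => integrable_finset_sum _ (fun l' _ =>
          integrable_finset_sum _ (fun j' _ => hE4int k k' l l' j j')))]
        refine Finset.sum_congr rfl fun k' _ => ?_
        rw [integral_finset_sum _ (fun l' _ => integrable_finset_sum _
          (fun j' _ => hE4int k k' l l' j j'))]
        refine Finset.sum_congr rfl fun l' _ => ?_
        rw [integral_finset_sum _ (fun j' _ => hE4int k k' l l' j j')]
        exact Finset.sum_congr rfl fun j' _ => hE4 k k' l l' j j']
    rw [big_sum_eval m d μv]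
  have hvar2 : variance T μ
      = (1/(m:ℝ)^2)^2 * ((m:ℝ)^4 * S^2 + 2*(m:ℝ)^3 * S + (m:ℝ)^2 * d) - S^2 := by
    rw [hvar]
    rw [show (μ[T ^ 2] : ℝ) = ∫ ω, T ω ^ 2 ∂μ from rfl, hsec,
      show (μ[T] : ℝ) = ∫ ω, T ω ∂μ from rfl, hmean]
  rw [hvar2]
  field_simp
  ring
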